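/- Let (X1,X2,X3,X4) be a random vector on finite sets with positive marginals whose entropy function is a·r1 + b·r2 with a,b ≥ 0, where r1 is the rank function of U_{2,4} and r2 is the rank function of U^{12}_{1,2} (r2(A) = min{1, |A ∩ {1,2}|}). Then X3 and X4 are uniformly distributed on alphabets of common size v, and a = log v for some positive integer v. -/

import Mathlib

open Finset
open scoped BigOperators
noncomputable section

/-- Probability that the `A`-marginal of the random vector with joint pmf `p`
takes the same value as on `x`. -/
def margProb {n : ℕ} {m : Fin n → ℕ} (p : (∀ i, Fin (m i)) → ℝ)
    (A : Finset (Fin n)) (x : ∀ i, Fin (m i)) : ℝ :=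
  ∑ y : ∀ i, Fin (m i), if ∀ i ∈ A, y i = x i then p y else 0

/-- The Shannon entropy `H(X_A)` of the subvector indexed by `A`, for the random
vector with joint pmf `p`. -/
def jointEntropy {n : ℕ} {m : Fin n → ℕ} (p : (∀ i, Fin (m i)) → ℝ)
    (A : Finset (Fin n)) : ℝ :=
  -∑ x : ∀ i, Fin (m i), p x * Real.log (margProb p A x)

/-- `p` is a probability mass function. -/
def IsPMF {α : Type*} [Fintype α] (p : α → ℝ) : Prop :=
  (∀ x, 0 ≤ p x) ∧ ∑ x, p x = 1

/-- `h` is an entropy function of degree `n`: it arises as `A ↦ H(X_A)` for a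
random vector `(X_1, …, X_n)` on finite sets. -/
def IsEntropyFunc (n : ℕ) (h : Finset (Fin n) → ℝ) : Prop :=
  ∃ (m : Fin n → ℕ) (p : (∀ i, Fin (m i)) → ℝ), IsPMF p ∧ ∀ A, jointEntropy p A = h A

/-- Marginal probability of the single coordinate `i` taking value `x`. -/
def marg1 {n : ℕ} {m : Fin n → ℕ} (p : (∀ i, Fin (m i)) → ℝ)
    (i : Fin n) (x : Fin (m i)) : ℝ :=
  ∑ y : ∀ j, Fin (m j), if y i = x then p y else 0

/-- Marginal probability of the pair of coordinates `(i, j)` taking values `(x, y)`. -/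
def marg2 {n : ℕ} {m : Fin n → ℕ} (p : (∀ i, Fin (m i)) → ℝ)
    (i j : Fin n) (x : Fin (m i)) (y : Fin (m j)) : ℝ :=
  ∑ z : ∀ k, Fin (m k), if z i = x ∧ z j = y then p z else 0

namespace St16

variable {n : ℕ} {m : Fin n → ℕ}

/-- canonical representative: zero outside `A` -/
def proj (hm : ∀ i, 0 < m i) (A : Finset (Fin n)) (x : ∀ i, Fin (m i)) :
    ∀ i, Fin (m i) :=
  fun i => if i ∈ A then x i else ⟨0, hm i⟩

lemma proj_agree (hm : ∀ i, 0 < m i) (A : Finset (Fin n)) (x : ∀ i, Fin (m i)) :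
    ∀ i ∈ A, proj hm A x i = x i := fun i hi => by simp [proj, hi]

lemma proj_idem (hm : ∀ i, 0 < m i) (A : Finset (Fin n)) (x : ∀ i, Fin (m i)) :
    proj hm A (proj hm A x) = proj hm A x := by
  funext i; by_cases hi : i ∈ A <;> simp [proj, hi]

lemma margProb_nonneg (p : (∀ i, Fin (m i)) → ℝ) (hp0 : ∀ x, 0 ≤ p x)
    (A : Finset (Fin n)) (x : ∀ i, Fin (m i)) : 0 ≤ margProb p A x := by
  refine Finset.sum_nonneg fun y _ => ?_
  split_ifs
  · exact hp0 y
  · exact le_refl 0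

lemma margProb_congr (p : (∀ i, Fin (m i)) → ℝ) {A : Finset (Fin n)}
    {x x' : ∀ i, Fin (m i)} (h : ∀ i ∈ A, x i = x' i) :
    margProb p A x = margProb p A x' := by
  refine Finset.sum_congr rfl fun y _ => if_congr ?_ rfl rfl
  constructor
  · exact fun H i hi => (H i hi).trans (h i hi)
  · exact fun H i hi => (H i hi).trans (h i hi).symm

lemma margProb_mono (p : (∀ i, Fin (m i)) → ℝ) (hp0 : ∀ x, 0 ≤ p x)
    {A B : Finset (Fin n)} (hAB : A ⊆ B) (x : ∀ i, Fin (m i)) :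
    margProb p B x ≤ margProb p A x := by
  refine Finset.sum_le_sum fun y _ => ?_
  by_cases hB : ∀ i ∈ B, y i = x i
  · rw [if_pos hB, if_pos fun i hi => hB i (hAB hi)]
  · rw [if_neg hB]
    split_ifs
    · exact hp0 y
    · exact le_refl 0

lemma p_le_margProb (p : (∀ i, Fin (m i)) → ℝ) (hp0 : ∀ x, 0 ≤ p x)
    (A : Finset (Fin n)) {x y : ∀ i, Fin (m i)} (h : ∀ i ∈ A, y i = x i) :
    p y ≤ margProb p A x := by
  have : margProb p A x = margProb p A y := margProb_congr p fun i hi => (h i hi).symm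
  rw [this, margProb]
  have h1 : (if ∀ i ∈ A, y i = y i then p y else 0) = p y := if_pos fun i _ => rfl
  calc p y = (if ∀ i ∈ A, y i = y i then p y else 0) := h1.symm
    _ ≤ _ := Finset.single_le_sum (f := fun z => if ∀ i ∈ A, z i = y i then p z else 0)
        (fun z _ => by split_ifs; exacts [hp0 z, le_refl 0]) (Finset.mem_univ y)

/-- The key grouping lemma. -/
lemma grp (hm : ∀ i, 0 < m i) (p : (∀ i, Fin (m i)) → ℝ) (A : Finset (Fin n))
    (G : (∀ i, Fin (m i)) → ℝ)
    (hG : ∀ x y, (∀ i ∈ A, x i = y i) → G x = G y) :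
    ∑ x : ∀ i, Fin (m i), p x * G x
      = ∑ x : ∀ i, Fin (m i), if proj hm A x = x then margProb p A x * G x else 0 := by
  have step1 : ∀ x : ∀ i, Fin (m i),
      (if proj hm A x = x then margProb p A x * G x else 0)
      = ∑ y : ∀ i, Fin (m i),
          if proj hm A x = x ∧ ∀ i ∈ A, y i = x i then p y * G x else 0 := by
    intro x
    by_cases hc : proj hm A x = x
    · rw [if_pos hc, margProb, Finset.sum_mul]
      refine Finset.sum_congr rfl fun y _ => ?_
      rw [ite_mul, zero_mul, if_congr (and_iff_right hc).symm rfl rfl]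
    · rw [if_neg hc]
      symm
      refine Finset.sum_eq_zero fun y _ => ?_
      rw [if_neg (fun H => hc H.1)]
  have main : ∀ y : ∀ i, Fin (m i),
      (∑ x : ∀ i, Fin (m i),
        if proj hm A x = x ∧ ∀ i ∈ A, y i = x i then p y * G x else 0) = p y * G y := by
    intro y
    have key : ∀ x : ∀ i, Fin (m i),
        (proj hm A x = x ∧ ∀ i ∈ A, y i = x i) ↔ x = proj hm A y := by
      intro x
      constructor
      · rintro ⟨hcan, hagr⟩
        funext i
        by_cases hi : i ∈ A
        · rw [proj_agree hm A y i hi, ← hagr i hi]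
        · rw [← hcan]
          simp [proj, hi]
      · rintro rfl
        exact ⟨proj_idem hm A y, fun i hi => (proj_agree hm A y i hi).symm⟩
    calc (∑ x : ∀ i, Fin (m i),
          if proj hm A x = x ∧ ∀ i ∈ A, y i = x i then p y * G x else 0)
        = ∑ x : ∀ i, Fin (m i), if x = proj hm A y then p y * G x else 0 :=
          Finset.sum_congr rfl fun x _ => if_congr (key x) rfl rfl
      _ = p y * G (proj hm A y) := by rw [Finset.sum_ite_eq' Finset.univ (proj hm A y)
            (fun x => p y * G x), if_pos (Finset.mem_univ _)]
      _ = p y * G y := by rw [hG (proj hm A y) y (proj_agree hm A y)]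
  symm
  calc (∑ x : ∀ i, Fin (m i), if proj hm A x = x then margProb p A x * G x else 0)
      = ∑ x : ∀ i, Fin (m i), ∑ y : ∀ i, Fin (m i),
          (if proj hm A x = x ∧ ∀ i ∈ A, y i = x i then p y * G x else 0) :=
        Finset.sum_congr rfl fun x _ => step1 x
    _ = ∑ y : ∀ i, Fin (m i), ∑ x : ∀ i, Fin (m i),
          (if proj hm A x = x ∧ ∀ i ∈ A, y i = x i then p y * G x else 0) :=
        Finset.sum_comm
    _ = ∑ y : ∀ i, Fin (m i), p y * G y := Finset.sum_congr rfl fun y _ => main y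

lemma sum_margProb (hm : ∀ i, 0 < m i) {p : (∀ i, Fin (m i)) → ℝ} (hp : IsPMF p)
    (A : Finset (Fin n)) :
    ∑ x : ∀ i, Fin (m i), (if proj hm A x = x then margProb p A x else 0) = 1 := by
  have := grp hm p A (fun _ => 1) (fun _ _ _ => rfl)
  simp only [mul_one] at this
  rw [← this, hp.2]

lemma jointEntropy_grp (hm : ∀ i, 0 < m i) (p : (∀ i, Fin (m i)) → ℝ)
    (A : Finset (Fin n)) :
    jointEntropy p A = -∑ x : ∀ i, Fin (m i),
      (if proj hm A x = x then margProb p A x * Real.log (margProb p A x) else 0) := by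
  rw [jointEntropy]
  congr 1
  exact grp hm p A (fun x => Real.log (margProb p A x))
    (fun x y h => by rw [margProb_congr p h])

lemma prodsum (hm : ∀ i, 0 < m i) {p : (∀ i, Fin (m i)) → ℝ} (hp : IsPMF p)
    {A B : Finset (Fin n)} (hd : Disjoint A B) :
    ∑ x : ∀ i, Fin (m i),
      (if proj hm (A ∪ B) x = x then margProb p A x * margProb p B x else 0) = 1 := by
  have step1 : ∀ x : ∀ i, Fin (m i),
      (if proj hm (A ∪ B) x = x then margProb p A x * margProb p B x else 0)
      = ∑ y : ∀ i, Fin (m i),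
          if proj hm (A ∪ B) x = x ∧ ∀ i ∈ A, y i = x i then p y * margProb p B x else 0 := by
    intro x
    by_cases hc : proj hm (A ∪ B) x = x
    · rw [if_pos hc, margProb, Finset.sum_mul]
      refine Finset.sum_congr rfl fun y _ => ?_
      rw [ite_mul, zero_mul, if_congr (and_iff_right hc).symm rfl rfl]
    · rw [if_neg hc]
      symm
      refine Finset.sum_eq_zero fun y _ => ?_
      rw [if_neg (fun H => hc H.1)]
  have step3 : ∀ y : ∀ i, Fin (m i),
      (∑ x : ∀ i, Fin (m i),
        if proj hm (A ∪ B) x = x ∧ ∀ i ∈ A, y i = x i then margProb p B x else 0)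
      = ∑ z : ∀ i, Fin (m i), (if proj hm B z = z then margProb p B z else 0) := by
    intro y
    rw [← Finset.sum_filter, ← Finset.sum_filter]
    refine Finset.sum_nbij' (fun x => proj hm B x)
      (fun z => fun i => if i ∈ A then y i else z i) ?_ ?_ ?_ ?_ ?_
    · intro x hx
      simp only [Finset.mem_filter, Finset.mem_univ, true_and] at hx ⊢
      exact proj_idem hm B x
    · intro z hz
      simp only [Finset.mem_filter, Finset.mem_univ, true_and] at hz ⊢
      constructor
      · funext i
        by_cases hiA : i ∈ A
        · simp [proj, hiA, Finset.mem_union]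
        · by_cases hiB : i ∈ B
          · simp [proj, hiA, hiB, Finset.mem_union]
          · have hz0 : z i = ⟨0, hm i⟩ := by rw [← hz]; simp [proj, hiB]
            simp [proj, hiA, hiB, Finset.mem_union, hz0]
      · intro i hi
        simp [hi]
    · intro x hx
      simp only [Finset.mem_filter, Finset.mem_univ, true_and] at hx
      funext i
      by_cases hiA : i ∈ A
      · simpa [hiA] using (hx.2 i hiA)
      · by_cases hiB : i ∈ B
        · simp [proj, hiA, hiB]
        · have hx0 : x i = ⟨0, hm i⟩ := by
            rw [← hx.1]; simp [proj, Finset.mem_union, hiA, hiB]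
          simp [proj, hiA, hiB, hx0]
    · intro z hz
      simp only [Finset.mem_filter, Finset.mem_univ, true_and] at hz
      funext i
      by_cases hiB : i ∈ B
      · have hiA : i ∉ A := Finset.disjoint_right.mp hd hiB
        simp [proj, hiA, hiB]
      · have hz0 : z i = ⟨0, hm i⟩ := by rw [← hz]; simp [proj, hiB]
        simp [proj, hiB, hz0]
    · intro x hx
      exact margProb_congr p fun i hi => (proj_agree hm B x i hi).symm
  have sumB := sum_margProb hm hp B
  calc (∑ x : ∀ i, Fin (m i),
        if proj hm (A ∪ B) x = x then margProb p A x * margProb p B x else 0)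
      = ∑ x : ∀ i, Fin (m i), ∑ y : ∀ i, Fin (m i),
          (if proj hm (A ∪ B) x = x ∧ ∀ i ∈ A, y i = x i then p y * margProb p B x else 0) :=
        Finset.sum_congr rfl fun x _ => step1 x
    _ = ∑ y : ∀ i, Fin (m i), ∑ x : ∀ i, Fin (m i),
          (if proj hm (A ∪ B) x = x ∧ ∀ i ∈ A, y i = x i then p y * margProb p B x else 0) :=
        Finset.sum_comm
    _ = ∑ y : ∀ i, Fin (m i), p y * ∑ x : ∀ i, Fin (m i),
          (if proj hm (A ∪ B) x = x ∧ ∀ i ∈ A, y i = x i then margProb p B x else 0) := by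
        refine Finset.sum_congr rfl fun y _ => ?_
        rw [Finset.mul_sum]
        exact Finset.sum_congr rfl fun x _ => by rw [mul_ite, mul_zero]
    _ = ∑ y : ∀ i, Fin (m i), p y * 1 := by
        refine Finset.sum_congr rfl fun y _ => ?_
        rw [step3 y, sumB]
    _ = 1 := by simp [hp.2]

lemma det (hm : ∀ i, 0 < m i) {p : (∀ i, Fin (m i)) → ℝ} (hp : IsPMF p)
    {A B : Finset (Fin n)} (hAB : A ⊆ B)
    (hE : jointEntropy p B = jointEntropy p A) (x : ∀ i, Fin (m i)) :
    margProb p B x = 0 ∨ margProb p B x = margProb p A x := by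
  set G : (∀ i, Fin (m i)) → ℝ :=
    fun u => Real.log (margProb p A u) - Real.log (margProb p B u) with hGdef
  have hG : ∀ u v, (∀ i ∈ B, u i = v i) → G u = G v := by
    intro u v h
    rw [hGdef]
    dsimp only
    rw [margProb_congr p (fun i hi => h i (hAB hi)), margProb_congr p h]
  have h0 : ∑ u : ∀ i, Fin (m i), p u * G u = 0 := by
    have hB : jointEntropy p B = -∑ u : ∀ i, Fin (m i), p u * Real.log (margProb p B u) := rfl
    have hA : jointEntropy p A = -∑ u : ∀ i, Fin (m i), p u * Real.log (margProb p A u) := rfl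
    rw [hGdef]
    simp only [mul_sub]
    rw [Finset.sum_sub_distrib]
    rw [hB, hA] at hE
    linarith
  rw [grp hm p B G hG] at h0
  have hnn : ∀ u ∈ Finset.univ (α := ∀ i, Fin (m i)),
      0 ≤ (if proj hm B u = u then margProb p B u * G u else 0) := by
    intro u _
    split_ifs
    · rcases eq_or_lt_of_le (margProb_nonneg p hp.1 B u) with h | h
      · rw [← h, zero_mul]
      · refine mul_nonneg (le_of_lt h) ?_
        rw [hGdef]
        dsimp only
        have hle : margProb p B u ≤ margProb p A u := margProb_mono p hp.1 hAB u
        have := Real.log_le_log h hle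
        linarith
    · exact le_refl 0
  have hall := (Finset.sum_eq_zero_iff_of_nonneg hnn).mp h0
  have hcanx : proj hm B (proj hm B x) = proj hm B x := proj_idem hm B x
  have hx := hall (proj hm B x) (Finset.mem_univ _)
  rw [if_pos hcanx] at hx
  have hBx : margProb p B x = margProb p B (proj hm B x) :=
    margProb_congr p fun i hi => (proj_agree hm B x i hi).symm
  have hAx : margProb p A x = margProb p A (proj hm B x) :=
    margProb_congr p fun i hi => (proj_agree hm B x i (hAB hi)).symm
  rcases mul_eq_zero.mp hx with h | h
  · exact Or.inl (hBx.trans h)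
  · rcases eq_or_lt_of_le (margProb_nonneg p hp.1 B (proj hm B x)) with h2 | h2
    · exact Or.inl (hBx.trans h2.symm)
    · right
      rw [hBx, hAx]
      have hApos : 0 < margProb p A (proj hm B x) :=
        lt_of_lt_of_le h2 (margProb_mono p hp.1 hAB _)
      have hlog : Real.log (margProb p A (proj hm B x))
          = Real.log (margProb p B (proj hm B x)) := by
        rw [hGdef] at h
        dsimp only at h
        linarith [h]
      exact (Real.log_injOn_pos (Set.mem_Ioi.2 h2) (Set.mem_Ioi.2 hApos)
        hlog.symm).symm ▸ rfl

lemma ind (hm : ∀ i, 0 < m i) {p : (∀ i, Fin (m i)) → ℝ} (hp : IsPMF p)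
    {A B : Finset (Fin n)} (hd : Disjoint A B)
    (hE : jointEntropy p (A ∪ B) = jointEntropy p A + jointEntropy p B)
    (x : ∀ i, Fin (m i)) :
    margProb p (A ∪ B) x = margProb p A x * margProb p B x := by
  set C : Finset (Fin n) := A ∪ B with hC
  have hAC : A ⊆ C := Finset.subset_union_left
  have hBC : B ⊆ C := Finset.subset_union_right
  set G : (∀ i, Fin (m i)) → ℝ := fun u =>
    Real.log (margProb p C u) - Real.log (margProb p A u) - Real.log (margProb p B u)
    with hGdef
  have hG : ∀ u v, (∀ i ∈ C, u i = v i) → G u = G v := by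
    intro u v h
    rw [hGdef]
    dsimp only
    rw [margProb_congr p (fun i hi => h i (hAC hi)),
      margProb_congr p (fun i hi => h i (hBC hi)), margProb_congr p h]
  have h0 : ∑ u : ∀ i, Fin (m i), p u * G u = 0 := by
    have hCC : jointEntropy p C = -∑ u : ∀ i, Fin (m i), p u * Real.log (margProb p C u) := rfl
    have hA : jointEntropy p A = -∑ u : ∀ i, Fin (m i), p u * Real.log (margProb p A u) := rfl
    have hB : jointEntropy p B = -∑ u : ∀ i, Fin (m i), p u * Real.log (margProb p B u) := rfl
    rw [hGdef]
    simp only [mul_sub]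
    rw [Finset.sum_sub_distrib, Finset.sum_sub_distrib]
    rw [hCC, hA, hB] at hE
    linarith
  rw [grp hm p C G hG] at h0
  -- termwise inequality
  have hterm : ∀ u : ∀ i, Fin (m i),
      margProb p C u - margProb p A u * margProb p B u ≤ margProb p C u * G u := by
    intro u
    rcases eq_or_lt_of_le (margProb_nonneg p hp.1 C u) with h | h
    · rw [← h, zero_mul, zero_sub, neg_nonpos]
      exact mul_nonneg (margProb_nonneg p hp.1 A u) (margProb_nonneg p hp.1 B u)
    · have hA : 0 < margProb p A u := lt_of_lt_of_le h (margProb_mono p hp.1 hAC u)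
      have hB : 0 < margProb p B u := lt_of_lt_of_le h (margProb_mono p hp.1 hBC u)
      have ht : 0 < margProb p A u * margProb p B u / margProb p C u := by positivity
      have hlog := Real.log_le_sub_one_of_pos ht
      rw [Real.log_div (by positivity) (ne_of_gt h), Real.log_mul (ne_of_gt hA) (ne_of_gt hB)]
        at hlog
      have hc2 : margProb p C u * (margProb p A u * margProb p B u / margProb p C u - 1)
          = margProb p A u * margProb p B u - margProb p C u := by
        field_simp
      have h2 := (mul_le_mul_of_nonneg_left hlog (le_of_lt h)).trans_eq hc2
      rw [hGdef]
      dsimp only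
      rw [show margProb p C u * (Real.log (margProb p C u) - Real.log (margProb p A u)
            - Real.log (margProb p B u))
          = -(margProb p C u * (Real.log (margProb p A u) + Real.log (margProb p B u)
            - Real.log (margProb p C u))) from by ring]
      linarith [h2]
  -- sum of the left side over canonical points is 0
  have hsum : ∑ u : ∀ i, Fin (m i),
      (if proj hm C u = u then margProb p C u - margProb p A u * margProb p B u else 0) = 0 := by
    have e1 : ∀ u : ∀ i, Fin (m i),
        (if proj hm C u = u then margProb p C u - margProb p A u * margProb p B u else 0)
        = (if proj hm C u = u then margProb p C u else 0)
          - (if proj hm C u = u then margProb p A u * margProb p B u else 0) := by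
      intro u
      split_ifs <;> simp
    rw [Finset.sum_congr rfl fun u _ => e1 u, Finset.sum_sub_distrib,
      sum_margProb hm hp C, prodsum hm hp hd]
    ring
  have hle : ∀ u ∈ Finset.univ (α := ∀ i, Fin (m i)),
      (if proj hm C u = u then margProb p C u - margProb p A u * margProb p B u else 0)
      ≤ (if proj hm C u = u then margProb p C u * G u else 0) := by
    intro u _
    split_ifs
    · exact hterm u
    · exact le_refl 0
  have heq := (Finset.sum_eq_sum_iff_of_le hle).mp (by rw [hsum, h0])
  -- equality at the canonical point of x
  have hcanx : proj hm C (proj hm C x) = proj hm C x := proj_idem hm C x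
  have hx := heq (proj hm C x) (Finset.mem_univ _)
  rw [if_pos hcanx, if_pos hcanx] at hx
  set v := proj hm C x with hv
  -- now derive margProb p C v = margProb p A v * margProb p B v
  have hmain : margProb p C v = margProb p A v * margProb p B v := by
    rcases eq_or_lt_of_le (margProb_nonneg p hp.1 C v) with h | h
    · have hzero : margProb p C v = 0 := h.symm
      rw [hzero, zero_mul, zero_sub] at hx
      rw [hzero]
      exact (neg_eq_zero.mp hx).symm
    · have hA : 0 < margProb p A v := lt_of_lt_of_le h (margProb_mono p hp.1 hAC v)
      have hB : 0 < margProb p B v := lt_of_lt_of_le h (margProb_mono p hp.1 hBC v)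
      by_contra hne
      have ht : 0 < margProb p A v * margProb p B v / margProb p C v := by positivity
      have htne : margProb p A v * margProb p B v / margProb p C v ≠ 1 := by
        intro h1
        apply hne
        field_simp at h1
        linarith [h1]
      have hlog := Real.log_lt_sub_one_of_pos ht htne
      rw [Real.log_div (by positivity) (ne_of_gt h), Real.log_mul (ne_of_gt hA) (ne_of_gt hB)]
        at hlog
      have hc2 : margProb p C v * (margProb p A v * margProb p B v / margProb p C v - 1)
          = margProb p A v * margProb p B v - margProb p C v := by
        field_simp
      have h2 := (mul_lt_mul_of_pos_left hlog h).trans_eq hc2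
      rw [hGdef] at hx
      dsimp only at hx
      rw [show margProb p C v * (Real.log (margProb p C v) - Real.log (margProb p A v)
            - Real.log (margProb p B v))
          = -(margProb p C v * (Real.log (margProb p A v) + Real.log (margProb p B v)
            - Real.log (margProb p C v))) from by ring] at hx
      linarith [h2, hx]
  have hCx : margProb p C x = margProb p C v :=
    margProb_congr p fun i hi => (proj_agree hm C x i hi).symm
  have hAx : margProb p A x = margProb p A v :=
    margProb_congr p fun i hi => (proj_agree hm C x i (hAC hi)).symm
  have hBx : margProb p B x = margProb p B v :=
    margProb_congr p fun i hi => (proj_agree hm C x i (hBC hi)).symm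
  rw [hCx, hAx, hBx, hmain]

lemma m_pos {p : (∀ i, Fin (m i)) → ℝ} (hp : IsPMF p) : ∀ i, 0 < m i := by
  intro i
  by_contra hcon
  push_neg at hcon
  have hmi : m i = 0 := Nat.le_zero.mp hcon
  have : IsEmpty (∀ j, Fin (m j)) := ⟨fun f => by
    have := f i
    rw [hmi] at this
    exact this.elim0⟩
  have h2 := hp.2
  rw [Finset.univ_eq_empty, Finset.sum_empty] at h2
  exact zero_ne_one h2

lemma marg1_eq (p : (∀ i, Fin (m i)) → ℝ) (i : Fin n) (x : ∀ j, Fin (m j)) :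
    marg1 p i (x i) = margProb p {i} x := by
  refine Finset.sum_congr rfl fun y _ => if_congr ?_ rfl rfl
  simp

lemma sum_marg1 {p : (∀ i, Fin (m i)) → ℝ} (hp : IsPMF p) (i : Fin n) :
    ∑ v : Fin (m i), marg1 p i v = 1 := by
  unfold marg1
  rw [Finset.sum_comm]
  rw [← hp.2]
  refine Finset.sum_congr rfl fun y _ => ?_
  rw [Finset.sum_ite_eq Finset.univ (y i) (fun _ => p y), if_pos (Finset.mem_univ _)]

end St16

/-- Rank function of the uniform matroid `U_{2,4}`. -/
def r24 (A : Finset (Fin 4)) : ℝ := min 2 (A.card : ℝ)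

/-- Rank function of `U^{12}_{1,2}`: a `U_{1,2}` on `{1,2}` (indices `0,1`) with
elements `3,4` (indices `2,3`) loops. -/
def rU12_12 (A : Finset (Fin 4)) : ℝ := min 1 ((A ∩ ({0, 1} : Finset (Fin 4))).card : ℝ)

/-- If the entropy function of `(X1,X2,X3,X4)` equals `a·r(U_{2,4}) + b·r(U^{12}_{1,2})`
with `a, b ≥ 0`, then `X3` and `X4` are uniform on alphabets of a common size `v ≥ 1`,
and `a = log v`. -/
theorem statement16 {m : Fin 4 → ℕ} (p : (∀ i, Fin (m i)) → ℝ)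
    (hpmf : IsPMF p)
    (hpos : ∀ (i : Fin 4) (x : Fin (m i)), 0 < marg1 p i x)
    (a b : ℝ) (ha : 0 ≤ a) (hb : 0 ≤ b)
    (hEnt : ∀ A : Finset (Fin 4), jointEntropy p A = a * r24 A + b * rU12_12 A) :
    (∀ x : Fin (m 2), marg1 p 2 x = (m 2 : ℝ)⁻¹) ∧
    (∀ x : Fin (m 3), marg1 p 3 x = (m 3 : ℝ)⁻¹) ∧
    m 2 = m 3 ∧ 0 < m 2 ∧ a = Real.log (m 2) := by
  have hm : ∀ i, 0 < m i := St16.m_pos hpmf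
  have hval : ∀ A : Finset (Fin 4), jointEntropy p A
      = a * min 2 (A.card : ℝ) + b * min 1 ((A ∩ ({0,1} : Finset (Fin 4))).card : ℝ) := hEnt
  have e1 : jointEntropy p {1} = a + b := by
    rw [hval, show (({1} : Finset (Fin 4))).card = 1 from rfl,
      show ((({1} : Finset (Fin 4)) ∩ {0,1}).card) = 1 from rfl]
    norm_num
  have e2 : jointEntropy p {2} = a := by
    rw [hval, show (({2} : Finset (Fin 4))).card = 1 from rfl,
      show ((({2} : Finset (Fin 4)) ∩ {0,1}).card) = 0 from rfl]
    norm_num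
  have e3 : jointEntropy p {3} = a := by
    rw [hval, show (({3} : Finset (Fin 4))).card = 1 from rfl,
      show ((({3} : Finset (Fin 4)) ∩ {0,1}).card) = 0 from rfl]
    norm_num
  have e12 : jointEntropy p {1,2} = 2*a + b := by
    rw [hval, show (({1,2} : Finset (Fin 4))).card = 2 from rfl,
      show ((({1,2} : Finset (Fin 4)) ∩ {0,1}).card) = 1 from rfl]
    norm_num; ring
  have e13 : jointEntropy p {1,3} = 2*a + b := by
    rw [hval, show (({1,3} : Finset (Fin 4))).card = 2 from rfl,
      show ((({1,3} : Finset (Fin 4)) ∩ {0,1}).card) = 1 from rfl]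
    norm_num; ring
  have e23 : jointEntropy p {2,3} = 2*a := by
    rw [hval, show (({2,3} : Finset (Fin 4))).card = 2 from rfl,
      show ((({2,3} : Finset (Fin 4)) ∩ {0,1}).card) = 0 from rfl]
    norm_num; ring
  have e123 : jointEntropy p {1,2,3} = 2*a + b := by
    rw [hval, show (({1,2,3} : Finset (Fin 4))).card = 3 from rfl,
      show ((({1,2,3} : Finset (Fin 4)) ∩ {0,1}).card) = 1 from rfl]
    norm_num; ring
  have hu23 : ({2} ∪ {3} : Finset (Fin 4)) = {2,3} := by decide
  have hu12 : ({1} ∪ {2} : Finset (Fin 4)) = {1,2} := by decide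
  have hu13 : ({1} ∪ {3} : Finset (Fin 4)) = {1,3} := by decide
  have hI23 : ∀ x, margProb p ({2,3} : Finset (Fin 4)) x
      = margProb p {2} x * margProb p {3} x := by
    intro x
    rw [← hu23]
    exact St16.ind hm hpmf (by decide)
      (by rw [hu23, e23, e2, e3]; ring) x
  have hI12 : ∀ x, margProb p ({1,2} : Finset (Fin 4)) x
      = margProb p {1} x * margProb p {2} x := by
    intro x
    rw [← hu12]
    exact St16.ind hm hpmf (by decide)
      (by rw [hu12, e12, e1, e2]; ring) x
  have hI13 : ∀ x, margProb p ({1,3} : Finset (Fin 4)) x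
      = margProb p {1} x * margProb p {3} x := by
    intro x
    rw [← hu13]
    exact St16.ind hm hpmf (by decide)
      (by rw [hu13, e13, e1, e3]; ring) x
  have hD12 : ∀ x, margProb p ({1,2,3} : Finset (Fin 4)) x = 0 ∨
      margProb p ({1,2,3} : Finset (Fin 4)) x = margProb p {1,2} x :=
    St16.det hm hpmf (by decide) (by rw [e123, e12])
  have hD13 : ∀ x, margProb p ({1,2,3} : Finset (Fin 4)) x = 0 ∨
      margProb p ({1,2,3} : Finset (Fin 4)) x = margProb p {1,3} x :=
    St16.det hm hpmf (by decide) (by rw [e123, e13])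
  have key : ∀ (y : Fin (m 2)) (z : Fin (m 3)), marg1 p 2 y = marg1 p 3 z := by
    intro y z
    set d : ∀ i, Fin (m i) := fun i => ⟨0, hm i⟩ with hd
    set x0 : ∀ i, Fin (m i) := Function.update (Function.update d 2 y) 3 z with hx0
    have hx02 : x0 2 = y := by
      rw [hx0, Function.update_of_ne (by decide : (2:Fin 4) ≠ 3), Function.update_self]
    have hx03 : x0 3 = z := by rw [hx0, Function.update_self]
    have hpos2 : 0 < margProb p {2} x0 := by
      rw [← St16.marg1_eq p 2 x0]; exact hpos 2 (x0 2)
    have hpos3 : 0 < margProb p {3} x0 := by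
      rw [← St16.marg1_eq p 3 x0]; exact hpos 3 (x0 3)
    have hP23pos : 0 < margProb p ({2,3} : Finset (Fin 4)) x0 := by
      rw [hI23 x0]; exact mul_pos hpos2 hpos3
    have hne : (∑ w : ∀ i, Fin (m i),
        if ∀ i ∈ ({2,3} : Finset (Fin 4)), w i = x0 i then p w else 0) ≠ 0 :=
      ne_of_gt hP23pos
    obtain ⟨w, -, hw⟩ := Finset.exists_ne_zero_of_sum_ne_zero hne
    have hcond : ∀ i ∈ ({2,3} : Finset (Fin 4)), w i = x0 i := by
      by_contra hcon
      rw [if_neg hcon] at hw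
      exact hw rfl
    rw [if_pos hcond] at hw
    have hpw : 0 < p w := lt_of_le_of_ne (hpmf.1 w) (Ne.symm hw)
    have hw2 : w 2 = y := (hcond 2 (by decide)).trans hx02
    have hw3 : w 3 = z := (hcond 3 (by decide)).trans hx03
    have h123pos : 0 < margProb p ({1,2,3} : Finset (Fin 4)) w :=
      lt_of_lt_of_le hpw (St16.p_le_margProb p hpmf.1 _ (fun i _ => rfl))
    have hq12 : margProb p ({1,2,3} : Finset (Fin 4)) w = margProb p {1,2} w :=
      (hD12 w).resolve_left (ne_of_gt h123pos)
    have hq13 : margProb p ({1,2,3} : Finset (Fin 4)) w = margProb p {1,3} w :=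
      (hD13 w).resolve_left (ne_of_gt h123pos)
    have hP1pos : 0 < margProb p {1} w := by
      rw [← St16.marg1_eq p 1 w]; exact hpos 1 (w 1)
    have hmul : margProb p {1} w * margProb p {2} w
        = margProb p {1} w * margProb p {3} w := by
      rw [← hI12 w, ← hI13 w, ← hq12, ← hq13]
    have h23 : margProb p {2} w = margProb p {3} w :=
      mul_left_cancel₀ (ne_of_gt hP1pos) hmul
    calc marg1 p 2 y = marg1 p 2 (w 2) := by rw [hw2]
      _ = margProb p {2} w := St16.marg1_eq p 2 w
      _ = margProb p {3} w := h23
      _ = marg1 p 3 (w 3) := (St16.marg1_eq p 3 w).symm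
      _ = marg1 p 3 z := by rw [hw3]
  set y0 : Fin (m 2) := ⟨0, hm 2⟩
  set z0 : Fin (m 3) := ⟨0, hm 3⟩
  set c : ℝ := marg1 p 3 z0 with hcdef
  have hc2 : ∀ y, marg1 p 2 y = c := fun y => key y z0
  have hc3 : ∀ z, marg1 p 3 z = c := fun z => (key y0 z).symm.trans (hc2 y0)
  have hm2ne : (m 2 : ℝ) ≠ 0 := Nat.cast_ne_zero.2 (Nat.pos_iff_ne_zero.mp (hm 2))
  have hm3ne : (m 3 : ℝ) ≠ 0 := Nat.cast_ne_zero.2 (Nat.pos_iff_ne_zero.mp (hm 3))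
  have hsum2 : (m 2 : ℝ) * c = 1 := by
    have hs := St16.sum_marg1 hpmf (2 : Fin 4)
    rw [Finset.sum_congr rfl (fun v _ => hc2 v), Finset.sum_const, Finset.card_univ,
      Fintype.card_fin, nsmul_eq_mul] at hs
    exact hs
  have hsum3 : (m 3 : ℝ) * c = 1 := by
    have hs := St16.sum_marg1 hpmf (3 : Fin 4)
    rw [Finset.sum_congr rfl (fun v _ => hc3 v), Finset.sum_const, Finset.card_univ,
      Fintype.card_fin, nsmul_eq_mul] at hs
    exact hs
  have hcne : c ≠ 0 := by
    intro h0
    rw [h0, mul_zero] at hsum2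
    exact zero_ne_one hsum2
  have hm23 : m 2 = m 3 := by
    have : (m 2 : ℝ) = (m 3 : ℝ) :=
      mul_right_cancel₀ hcne (hsum2.trans hsum3.symm)
    exact_mod_cast this
  have hcval : c = (m 2 : ℝ)⁻¹ := by
    rw [inv_eq_one_div, eq_div_iff hm2ne, mul_comm]
    exact hsum2
  have hcomp : jointEntropy p ({2} : Finset (Fin 4)) = Real.log (m 2) := by
    calc jointEntropy p ({2} : Finset (Fin 4))
        = -∑ x : ∀ i, Fin (m i), p x * Real.log (margProb p {2} x) := rfl
      _ = -∑ x : ∀ i, Fin (m i), p x * Real.log ((m 2 : ℝ)⁻¹) := by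
          refine congrArg Neg.neg (Finset.sum_congr rfl fun x _ => ?_)
          rw [← St16.marg1_eq p 2 x, (hc2 (x 2)).trans hcval]
      _ = -((∑ x : ∀ i, Fin (m i), p x) * Real.log ((m 2 : ℝ)⁻¹)) := by
          rw [← Finset.sum_mul]
      _ = Real.log (m 2) := by rw [hpmf.2, Real.log_inv]; ring
  refine ⟨fun x => (hc2 x).trans hcval, fun x => (hc3 x).trans ?_, hm23, hm 2,
    (e2.symm.trans hcomp)⟩
  rw [hcval, hm23]
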